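/- Let X be a real random variable with |X| ≤ 1, defined on a probability space (Ω, P), and let A ⊆ Ω have P(A) = γ > 1/2. Then the variance of X with respect to the conditional measure P(·|A) is at most 4 times the variance of X with respect to P. -/

import Mathlib

open MeasureTheory ProbabilityTheory

lemma var_le_integral_sub_sq {Ω : Type*} [MeasurableSpace Ω] (ν : Measure Ω)
    [IsProbabilityMeasure ν] {X : Ω → ℝ} (hX : MemLp X 2 ν) (c : ℝ) :
    variance X ν ≤ ∫ ω, (X ω - c) ^ 2 ∂ν := by
  have hint : Integrable X ν := hX.integrable (by norm_num)
  have hsq : Integrable (fun ω => X ω ^ 2) ν := hX.integrable_sq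
  have h1 : ∫ ω, (X ω - c) ^ 2 ∂ν = ∫ ω, X ω ^ 2 ∂ν - 2 * c * ∫ ω, X ω ∂ν + c ^ 2 := by
    have hexp : (fun ω => (X ω - c) ^ 2)
        = fun ω => (X ω ^ 2 - 2 * c * X ω) + c ^ 2 := by funext ω; ring
    have hi2 : Integrable (fun ω => 2 * c * X ω) ν := hint.const_mul _
    have hi1 : Integrable (fun ω => X ω ^ 2 - 2 * c * X ω) ν := hsq.sub hi2
    rw [hexp, integral_add hi1 (integrable_const _),
      integral_sub hsq hi2, integral_const_mul, integral_const]
    simp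
  rw [h1, variance_eq_sub hX]
  simp only [Pi.pow_apply]
  nlinarith [sq_nonneg (∫ ω, X ω ∂ν - c)]

theorem stmt8 {Ω : Type*} [MeasurableSpace Ω] (μ : Measure Ω) [IsProbabilityMeasure μ]
    (A : Set Ω) (hA : MeasurableSet A) (γ : ℝ) (hγ : (μ A).toReal = γ) (hγhalf : 1 / 2 < γ)
    (X : Ω → ℝ) (hX : Measurable X) (hbd : ∀ ω, |X ω| ≤ 1) :
    variance X (μ[|A]) ≤ 4 * variance X μ := by
  have hγpos : 0 < γ := lt_trans (by norm_num) hγhalf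
  have hA0 : μ A ≠ 0 := by
    intro h; rw [h] at hγ; simp at hγ; linarith
  have hAtop : μ A ≠ ⊤ := measure_ne_top μ A
  haveI : IsProbabilityMeasure (μ[|A]) := cond_isProbabilityMeasure hA0
  set m := ∫ ω, X ω ∂μ with hm
  have hℒcond : MemLp X 2 (μ[|A]) :=
    MemLp.of_bound hX.aestronglyMeasurable 1 (Filter.Eventually.of_forall fun ω => hbd ω)
  have hℒ : MemLp X 2 μ :=
    MemLp.of_bound hX.aestronglyMeasurable 1 (Filter.Eventually.of_forall fun ω => hbd ω)
  have hisq : Integrable (fun ω => (X ω - m) ^ 2) μ := by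
    have := (hℒ.sub (memLp_const m)).integrable_sq
    simpa [Pi.sub_apply] using this
  have step1 : variance X (μ[|A]) ≤ ∫ ω, (X ω - m) ^ 2 ∂(μ[|A]) :=
    var_le_integral_sub_sq _ hℒcond m
  have step2 : ∫ ω, (X ω - m) ^ 2 ∂(μ[|A]) = γ⁻¹ * ∫ ω in A, (X ω - m) ^ 2 ∂μ := by
    rw [ProbabilityTheory.cond, integral_smul_measure, ENNReal.toReal_inv, hγ, smul_eq_mul]
  have step3 : ∫ ω in A, (X ω - m) ^ 2 ∂μ ≤ ∫ ω, (X ω - m) ^ 2 ∂μ :=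
    setIntegral_le_integral hisq (Filter.Eventually.of_forall fun ω => sq_nonneg _)
  have step4 : ∫ ω, (X ω - m) ^ 2 ∂μ = variance X μ := by
    rw [variance_eq_integral hX.aemeasurable]
  have hvar : 0 ≤ variance X μ := variance_nonneg X μ
  have hset : 0 ≤ ∫ ω in A, (X ω - m) ^ 2 ∂μ :=
    integral_nonneg fun ω => sq_nonneg _
  have hinv : γ⁻¹ ≤ 4 := by
    rw [inv_le_comm₀ hγpos (by norm_num)]
    linarith
  calc variance X (μ[|A]) ≤ γ⁻¹ * ∫ ω in A, (X ω - m) ^ 2 ∂μ := by rw [← step2]; exact step1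
    _ ≤ γ⁻¹ * ∫ ω, (X ω - m) ^ 2 ∂μ := by
        exact mul_le_mul_of_nonneg_left step3 (inv_nonneg.2 hγpos.le)
    _ = γ⁻¹ * variance X μ := by rw [step4]
    _ ≤ 4 * variance X μ := mul_le_mul_of_nonneg_right hinv hvar
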